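/- Let S be an important X–Y separator in a directed graph G and suppose X' ⊃ X is such that S is also an X'–Y separator (with X' disjoint from Y and S). Then S is an important X'–Y separator. -/

import Mathlib

variable {V : Type*}

/-- A single edge step in `G \ S`: an edge of `E` with both endpoints outside `S`. -/
def DStep (E : V → V → Prop) (S : Set V) (a b : V) : Prop :=
  E a b ∧ a ∉ S ∧ b ∉ S

/-- `b` is reachable from `a` by a directed path in `G \ S`. -/
def DReach (E : V → V → Prop) (S : Set V) (a b : V) : Prop :=
  Relation.ReflTransGen (DStep E S) a b

/-- The set of vertices reachable from the set `X` in `G \ S`. -/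
def RSet (E : V → V → Prop) (S X : Set V) : Set V :=
  {v | ∃ x ∈ X, DReach E S x v}

/-- `S` is an `X`–`Y` separator: disjoint from `X ∪ Y` and destroying all `X → Y` paths. -/
def IsSep (E : V → V → Prop) (X Y S : Set V) : Prop :=
  S ∩ (X ∪ Y) = ∅ ∧ ∀ x ∈ X, ∀ y ∈ Y, ¬ DReach E S x y

/-- `S` is an inclusion-wise minimal `X`–`Y` separator. -/
def IsMinSep (E : V → V → Prop) (X Y S : Set V) : Prop :=
  IsSep E X Y S ∧ ∀ S', S' ⊂ S → ¬ IsSep E X Y S'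

/-- `S` is an important `X`–`Y` separator: a minimal separator such that no separator of at
most the same size has a strictly larger set of vertices reachable from `X`. -/
def IsImpSep (E : V → V → Prop) (X Y S : Set V) : Prop :=
  IsMinSep E X Y S ∧
    ¬ ∃ S', IsSep E X Y S' ∧ S'.ncard ≤ S.ncard ∧ RSet E S X ⊂ RSet E S' X

/-- `S` is a (vertex) multiway cut of `(G, T)`. -/
def IsMWC (E : V → V → Prop) (T S : Set V) : Prop :=
  S ∩ T = ∅ ∧ ∀ t₁ ∈ T, ∀ t₂ ∈ T, t₁ ≠ t₂ → ¬ DReach E S t₁ t₂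

/-- The forward shadow of `S` with respect to `T`: vertices outside `S ∪ T` not reachable
from `T` in `G \ S`. -/
def fShadow (E : V → V → Prop) (T S : Set V) : Set V :=
  {v | v ∉ S ∧ v ∉ T ∧ ∀ t ∈ T, ¬ DReach E S t v}

/-- The reverse shadow of `S` with respect to `T`: vertices outside `S ∪ T` that cannot
reach `T` in `G \ S`. -/
def rShadow (E : V → V → Prop) (T S : Set V) : Set V :=
  {v | v ∉ S ∧ v ∉ T ∧ ∀ t ∈ T, ¬ DReach E S v t}

/-- The adjacency of `torso(G, C)`: an edge `(a, b)` whenever `a, b ∈ C` and `G` has a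
directed `a → b` path whose internal vertices all lie outside `C`. -/
def TorsoAdj (E : V → V → Prop) (C : Set V) (a b : V) : Prop :=
  a ∈ C ∧ b ∈ C ∧ ∃ w, E a w ∧ Relation.ReflTransGen (fun x y => x ∉ C ∧ E x y) w b

private lemma rset_not_mem {E : V → V → Prop} {S X : Set V}
    (h : S ∩ X = ∅) {v : V} (hv : v ∈ RSet E S X) : v ∉ S := by
  obtain ⟨x, hx, hr⟩ := hv
  rcases hr.cases_tail with rfl | ⟨c, _, hstep⟩
  · exact fun hs => Set.eq_empty_iff_forall_notMem.mp h v ⟨hs, hx⟩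
  · exact hstep.2.2

private lemma first_hit {E : V → V → Prop} {S : Set V} {s y : V} :
    ∀ {x}, DReach E (S \ {s}) x y → x ∉ S → ¬ DReach E S x y →
      ∃ u, DReach E S x u ∧ u ∉ S ∧ E u s := by
  intro x hr
  induction hr using Relation.ReflTransGen.head_induction_on with
  | refl => intro _ hn; exact absurd Relation.ReflTransGen.refl hn
  | head hstep htail ih =>
    rename_i a c
    intro ha hn
    obtain ⟨hE, _, hc⟩ := hstep
    by_cases hcs : c = s
    · exact ⟨a, Relation.ReflTransGen.refl, ha, hcs ▸ hE⟩
    · have hcS : c ∉ S := fun h => hc ⟨h, hcs⟩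
      have hnc : ¬ DReach E S c y := fun h =>
        hn (Relation.ReflTransGen.head ⟨hE, ha, hcS⟩ h)
      obtain ⟨u, hu, huS, huE⟩ := ih hcS hnc
      exact ⟨u, Relation.ReflTransGen.head ⟨hE, ha, hcS⟩ hu, huS, huE⟩

/-- If `S` is an important `X`–`Y` separator and `X' ⊃ X` is such that `S`
is an `X'`–`Y` separator, then `S` is an important `X'`–`Y` separator. -/
theorem important_separator_push_source (E : V → V → Prop) (X X' Y S : Set V)
    (hImp : IsImpSep E X Y S) (hXX' : X ⊂ X') (hsep : IsSep E X' Y S) :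
    IsImpSep E X' Y S := by
  obtain ⟨⟨⟨hSd, hSp⟩, hmin⟩, himp⟩ := hImp
  have hX'sub : X ⊆ X' := hXX'.1
  have sepdown : ∀ T, IsSep E X' Y T → IsSep E X Y T := by
    rintro T ⟨hd, hp⟩
    refine ⟨Set.eq_empty_of_subset_empty ?_, fun x hx => hp x (hX'sub hx)⟩
    calc T ∩ (X ∪ Y) ⊆ T ∩ (X' ∪ Y) :=
          Set.inter_subset_inter_right _ (Set.union_subset_union_left _ hX'sub)
      _ = ∅ := hd
  refine ⟨⟨hsep, fun S'' hsub hS'' => hmin S'' hsub (sepdown _ hS'')⟩, ?_⟩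
  rintro ⟨S', hsepS', hcard, hlt⟩
  have hsub' : RSet E S X' ⊆ RSet E S' X' := hlt.subset
  have hS'X' : S' ∩ X' = ∅ := by
    apply Set.eq_empty_of_subset_empty
    calc S' ∩ X' ⊆ S' ∩ (X' ∪ Y) := Set.inter_subset_inter_right _ Set.subset_union_left
      _ = ∅ := hsepS'.1
  have hdisj : ∀ v ∈ RSet E S' X', v ∉ S' := fun v hv => rset_not_mem hS'X' hv
  have hSX0 : S ∩ X = ∅ := by
    apply Set.eq_empty_of_subset_empty
    calc S ∩ X ⊆ S ∩ (X ∪ Y) := Set.inter_subset_inter_right _ Set.subset_union_left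
      _ = ∅ := hSd
  -- every vertex reachable from X avoiding S is reachable avoiding S'
  have key : RSet E S X ⊆ RSet E S' X := by
    rintro v ⟨x, hx, hr⟩
    refine ⟨x, hx, ?_⟩
    induction hr with
    | refl => exact Relation.ReflTransGen.refl
    | @tail b c hab hstep ih =>
      have hb : b ∈ RSet E S' X' := hsub' ⟨x, hX'sub hx, hab⟩
      have hc : c ∈ RSet E S' X' := hsub' ⟨x, hX'sub hx, hab.tail hstep⟩
      exact ih.tail ⟨hstep.1, hdisj _ hb, hdisj _ hc⟩
  by_cases heq : RSet E S X = RSet E S' X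
  · -- then S ⊆ S', contradicting the strict inclusion of reachability sets
    have hSsub : S ⊆ S' := by
      intro s hs
      have hnot : ¬ IsSep E X Y (S \ {s}) :=
        hmin _ (Set.sdiff_singleton_ssubset.mpr hs)
      have hdisj2 : (S \ {s}) ∩ (X ∪ Y) = ∅ := by
        apply Set.eq_empty_of_subset_empty
        calc (S \ {s}) ∩ (X ∪ Y) ⊆ S ∩ (X ∪ Y) :=
              Set.inter_subset_inter_left _ Set.diff_subset
          _ = ∅ := hSd
      have hex : ∃ x ∈ X, ∃ y ∈ Y, DReach E (S \ {s}) x y := by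
        by_contra h; push_neg at h; exact hnot ⟨hdisj2, h⟩
      obtain ⟨x, hx, y, hy, hr⟩ := hex
      have hxS : x ∉ S := fun h => Set.eq_empty_iff_forall_notMem.mp hSX0 x ⟨h, hx⟩
      obtain ⟨u, hu, huS, huE⟩ := first_hit hr hxS (hSp x hx y hy)
      have huR : u ∈ RSet E S' X := heq ▸ ⟨x, hx, hu⟩
      obtain ⟨x0, hx0, hr0⟩ := huR
      have huR' : u ∈ RSet E S' X' := ⟨x0, hX'sub hx0, hr0⟩
      by_contra hsS'
      have hsR : s ∈ RSet E S X :=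
        heq ▸ (⟨x0, hx0, hr0.tail ⟨huE, hdisj u huR', hsS'⟩⟩ : s ∈ RSet E S' X)
      exact rset_not_mem hSX0 hsR hs
    have hmono : RSet E S' X' ⊆ RSet E S X' := by
      rintro v ⟨x, hx, hr⟩
      exact ⟨x, hx, Relation.ReflTransGen.mono (fun a b hab => ⟨hab.1, fun h => hab.2.1 (hSsub h),
        fun h => hab.2.2 (hSsub h)⟩) x v hr⟩
    exact hlt.not_subset hmono
  · exact himp ⟨S', sepdown _ hsepS', hcard, key.ssubset_of_ne heq⟩
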